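/- Let E be a left module over L⁰(𝓕,ℝ) such that for any x, y ∈ E and any countable partition {Aₙ} of Ω into 𝓕-measurable sets, Ĩ_{Aₙ}x = Ĩ_{Aₙ}y for all n implies x = y. Let U ⊆ E be L⁰-convex, L⁰-absorbent, and L⁰-balanced with the countable concatenation property. If x ∈ E admits a sequence {ξₙ} in L⁰₊₊(𝓕) such that x ∈ ξₙU for each n ∈ ℕ and infₙ ξₙ < 1 a.e. on Ω (equivalently, the random gauge functional p_U(x) = ⋀{ξ ∈ L⁰₊₊(𝓕) : x ∈ ξU} satisfies p_U(x) < 1 a.e.), then x ∈ U. -/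

import Mathlib

open MeasureTheory Filter Classical

/-- `Ĩ_A`, the equivalence class in `L⁰(𝓕,ℝ)` of the indicator function of a measurable set
`A` (junk value `0` if `A` is not measurable). -/
noncomputable def ind {Ω : Type*} [MeasurableSpace Ω] (P : Measure Ω) (A : Set Ω) :
    Ω →ₘ[P] ℝ :=
  if h : MeasurableSet A then
    AEEqFun.mk (A.indicator fun _ => (1 : ℝ))
      ((measurable_const.indicator h).aestronglyMeasurable)
  else 0

/-- Let `E` be an `L⁰(𝓕,ℝ)`-module in which countable concatenations are
uniquely determined, and `U ⊆ E` an `L⁰`-convex, `L⁰`-absorbent, `L⁰`-balanced subset with the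
countable concatenation property.  If `x ∈ E` admits a sequence `{ξₙ}` in `L⁰₊₊(𝓕)` with
`x ∈ ξₙ·U` for every `n` and `infₙ ξₙ < 1` a.e., then `x ∈ U`. -/
theorem stmt6
    {Ω E : Type*} [MeasurableSpace Ω] {P : Measure Ω} [IsProbabilityMeasure P]
    [AddCommGroup E] [SMul (Ω →ₘ[P] ℝ) E]
    -- `E` is a left module over `L⁰(𝓕,ℝ)`
    (hmoda : ∀ (ξ : Ω →ₘ[P] ℝ) (x y : E), ξ • (x + y) = ξ • x + ξ • y)
    (hmodb : ∀ (ξ η : Ω →ₘ[P] ℝ) (x : E), (ξ + η) • x = ξ • x + η • x)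
    (hmodc : ∀ (ξ η : Ω →ₘ[P] ℝ) (x : E), (ξ * η) • x = ξ • (η • x))
    (hmodd : ∀ x : E, (1 : Ω →ₘ[P] ℝ) • x = x)
    -- countable concatenations in `E` are uniquely determined
    (hdet : ∀ (x y : E) (A : ℕ → Set Ω), (∀ n, MeasurableSet (A n)) →
      Pairwise (Function.onFun Disjoint A) → (⋃ n, A n) = Set.univ →
      (∀ n, ind P (A n) • x = ind P (A n) • y) → x = y)
    (U : Set E)
    -- `U` is `L⁰`-convex
    (hconv : ∀ x ∈ U, ∀ y ∈ U, ∀ ξ : Ω →ₘ[P] ℝ,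
      (∀ᵐ ω ∂P, 0 ≤ ξ ω ∧ ξ ω ≤ 1) → ξ • x + (1 - ξ) • y ∈ U)
    -- `U` is `L⁰`-absorbent
    (habs : ∀ x : E, ∃ ξ : Ω →ₘ[P] ℝ, (∀ᵐ ω ∂P, 0 < ξ ω) ∧
      ∀ η : Ω →ₘ[P] ℝ, (∀ᵐ ω ∂P, |η ω| ≤ ξ ω) → η • x ∈ U)
    -- `U` is `L⁰`-balanced
    (hbal : ∀ η : Ω →ₘ[P] ℝ, (∀ᵐ ω ∂P, |η ω| ≤ 1) → ∀ u ∈ U, η • u ∈ U)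
    -- `U` has the countable concatenation property
    (hccp : ∀ (u : ℕ → E), (∀ n, u n ∈ U) → ∀ (A : ℕ → Set Ω),
      (∀ n, MeasurableSet (A n)) → Pairwise (Function.onFun Disjoint A) → (⋃ n, A n) = Set.univ →
      ∃ u₀ ∈ U, ∀ n, ind P (A n) • u₀ = ind P (A n) • u n)
    -- the point `x` and the sequence `{ξₙ}` in `L⁰₊₊(𝓕)` with `x ∈ ξₙ·U`, `infₙ ξₙ < 1` a.e.
    (x : E) (ξ : ℕ → Ω →ₘ[P] ℝ)
    (hξpos : ∀ n, ∀ᵐ ω ∂P, 0 < ξ n ω)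
    (hxin : ∀ n, ∃ u ∈ U, x = ξ n • u)
    (hinf : ∀ᵐ ω ∂P, (⨅ n, ξ n ω) < 1) :
    x ∈ U := by

  classical
  -- measurable representative sets where `ξ n < 1`
  set B : ℕ → Set Ω := fun n => {ω | (ξ n : Ω → ℝ) ω < 1} with hB
  have hBmeas : ∀ n, MeasurableSet (B n) := fun n =>
    measurableSet_lt (ξ n).stronglyMeasurable.measurable measurable_const
  set N : Set Ω := (⋃ n, B n)ᶜ with hN
  have hNmeas : MeasurableSet N := (MeasurableSet.iUnion hBmeas).compl
  have hNae : ∀ᵐ ω ∂P, ω ∉ N := by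
    filter_upwards [hinf] with ω hω
    intro hc
    rw [hN, Set.mem_compl_iff, Set.mem_iUnion] at hc
    push_neg at hc
    simp only [hB, Set.mem_setOf_eq, not_lt] at hc
    exact absurd (le_ciInf hc) (not_le.mpr hω)
  -- the partition
  set A : ℕ → Set Ω := fun n => disjointed B n ∪ (if n = 0 then N else ∅) with hA
  have hAmeas : ∀ n, MeasurableSet (A n) := by
    intro n
    refine (MeasurableSet.disjointed hBmeas n).union ?_
    split <;> simp [hNmeas]
  have hdBN : ∀ n, Disjoint (disjointed B n) N := by
    intro n
    rw [Set.disjoint_left]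
    intro ω hω hωN
    exact hωN (Set.mem_iUnion.mpr ⟨n, disjointed_subset B n hω⟩)
  have hAdisj : Pairwise (Function.onFun Disjoint A) := by
    intro i j hij
    simp only [Function.onFun, hA]
    rcases eq_or_ne i 0 with hi | hi
    · have hj : j ≠ 0 := fun h => hij (hi.trans h.symm)
      rw [if_pos hi, if_neg hj, Set.union_empty]
      exact Disjoint.union_left ((disjoint_disjointed B) hij) (hdBN j).symm
    · rw [if_neg hi, Set.union_empty]
      refine Disjoint.union_right ((disjoint_disjointed B) hij) ?_
      split
      · exact hdBN i
      · exact disjoint_bot_right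
  have hAunion : (⋃ n, A n) = Set.univ := by
    apply Set.eq_univ_of_forall
    intro ω
    by_cases hω : ω ∈ ⋃ n, B n
    · rw [← iUnion_disjointed] at hω
      obtain ⟨n, hn⟩ := Set.mem_iUnion.mp hω
      exact Set.mem_iUnion.mpr ⟨n, Set.mem_union_left _ hn⟩
    · refine Set.mem_iUnion.mpr ⟨0, Set.mem_union_right _ ?_⟩
      rw [if_pos rfl]
      exact hω
  -- the elements of U
  choose u huU hux using hxin
  -- coeFn of ind
  have hind_coe : ∀ (S : Set Ω) (hS : MeasurableSet S),
      (ind P S : Ω → ℝ) =ᵐ[P] S.indicator (fun _ => (1:ℝ)) := by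
    intro S hS
    rw [ind, dif_pos hS]
    exact AEEqFun.coeFn_mk _ _
  -- idempotence of ind
  have hidem : ∀ (S : Set Ω), MeasurableSet S → ind P S * ind P S = ind P S := by
    intro S hS
    rw [ind, dif_pos hS, AEEqFun.mk_mul_mk]
    congr 1
    funext ω
    by_cases h : ω ∈ S <;> simp [h]
  have hη_bound : ∀ n, ∀ᵐ ω ∂P, |(ind P (A n) * ξ n) ω| ≤ 1 := by
    intro n
    filter_upwards [AEEqFun.coeFn_mul (ind P (A n)) (ξ n),
      hind_coe (A n) (hAmeas n), hξpos n, hNae] with ω h1 h2 h3 h4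
    rw [h1, Pi.mul_apply, h2]
    by_cases hωA : ω ∈ A n
    · have hωd : ω ∈ disjointed B n := by
        rcases hωA with h | h
        · exact h
        · split at h
          · exact absurd h h4
          · exact absurd h (Set.notMem_empty ω)
      have hlt : (ξ n : Ω → ℝ) ω < 1 := disjointed_subset B n hωd
      rw [Set.indicator_of_mem hωA, one_mul, abs_of_pos h3]
      exact le_of_lt hlt
    · rw [Set.indicator_of_notMem hωA, zero_mul, abs_zero]
      exact zero_le_one
  have hv : ∀ n, (ind P (A n) * ξ n) • u n ∈ U := fun n =>
    hbal _ (hη_bound n) (u n) (huU n)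
  obtain ⟨u₀, hu₀U, hu₀⟩ := hccp (fun n => (ind P (A n) * ξ n) • u n) hv A hAmeas hAdisj hAunion
  have hx : x = u₀ := by
    apply hdet x u₀ A hAmeas hAdisj hAunion
    intro n
    rw [hu₀ n, ← hmodc, ← mul_assoc, hidem (A n) (hAmeas n), hmodc, ← hux n]
  rw [hx]
  exact hu₀U
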